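/- In the gluing setup D →(i_*) C →(j^*) E with weight structures w_D and w_E, the weight structure w on C glued from w_D and w_E is the unique weight structure on C for which both i_* and j^* are weight-exact. -/

import Mathlib

open CategoryTheory Category Limits Pretriangulated

/-- `X` is a retract of `Y`. -/
def IsRetract {C : Type*} [Category C] (X Y : C) : Prop :=
  ∃ (i : X ⟶ Y) (r : Y ⟶ X), i ≫ r = 𝟙 X

/-- A weight structure on a triangulated category `C`, given by the pair of classes
`le = C^{w≤0}` and `ge = C^{w≥0}` (Bondarko). -/
structure IsWeightStructure (C : Type*) [Category C] [HasZeroObject C] [HasShift C ℤ]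
    [Preadditive C] [∀ n : ℤ, (shiftFunctor C n).Additive] [Pretriangulated C]
    (le ge : Set C) : Prop where
  le_retract : ∀ ⦃X Y : C⦄, Y ∈ le → IsRetract X Y → X ∈ le
  ge_retract : ∀ ⦃X Y : C⦄, Y ∈ ge → IsRetract X Y → X ∈ ge
  le_shift : ∀ ⦃X : C⦄, X ∈ le → X⟦(1 : ℤ)⟧ ∈ le
  ge_shift : ∀ ⦃X : C⦄, X ∈ ge → X⟦(-1 : ℤ)⟧ ∈ ge
  orth : ∀ ⦃X Y : C⦄, X ∈ ge → Y ∈ le → ∀ f : X ⟶ Y⟦(1 : ℤ)⟧, f = 0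
  decomp : ∀ M : C, ∃ (A B : C) (_ : A ∈ le) (_ : B ∈ ge)
    (f : M ⟶ A) (g : A ⟶ B) (h : B ⟶ M⟦(1 : ℤ)⟧), Triangle.mk f g h ∈ distTriang C
variable {D : Type*} [Category D] [HasZeroObject D] [HasShift D ℤ]
  [Preadditive D] [∀ n : ℤ, (shiftFunctor D n).Additive] [Pretriangulated D]
variable {C : Type*} [Category C] [HasZeroObject C] [HasShift C ℤ]
  [Preadditive C] [∀ n : ℤ, (shiftFunctor C n).Additive] [Pretriangulated C]
variable {E : Type*} [Category E] [HasZeroObject E] [HasShift E ℤ]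
  [Preadditive E] [∀ n : ℤ, (shiftFunctor E n).Additive] [Pretriangulated E]

/-! Gluing data (recollement) `D →(i_*) C →(j^*) E`: the six exact functors
`iS = i_*`, `iU = i^*`, `iSh = i^!`, `jU = j^*`, `jL = j_!`, `jR = j_*`, with the
adjunctions `(i^*, i_*)`, `(i_*, i^!)`, `(j_!, j^*)`, `(j^*, j_*)`, `i_*` fully
faithful with image the kernel of `j^*`, the two gluing distinguished triangles, and
`i^* j_! = 0 = i^! j_*`. -/

variable (iS : D ⥤ C) (iU : C ⥤ D) (iSh : C ⥤ D)
  (jU : C ⥤ E) (jL : E ⥤ C) (jR : E ⥤ C)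
  [iS.CommShift ℤ] [iS.IsTriangulated] [iU.CommShift ℤ] [iU.IsTriangulated]
  [iSh.CommShift ℤ] [iSh.IsTriangulated] [jU.CommShift ℤ] [jU.IsTriangulated]
  [jL.CommShift ℤ] [jL.IsTriangulated] [jR.CommShift ℤ] [jR.IsTriangulated]
  [iS.Full] [iS.Faithful]


section Helpers

private lemma retract_obj₁ {T : Triangle C} (hT : T ∈ distTriang C) (h : T.mor₃ = 0) :
    IsRetract T.obj₁ T.obj₂ := by
  have : Mono T.mor₁ := T.mono₁ hT h
  have : IsSplitMono T.mor₁ := isSplitMono_of_mono T.mor₁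
  exact ⟨T.mor₁, retraction T.mor₁, IsSplitMono.id T.mor₁⟩

private lemma retract_obj₃ {T : Triangle C} (hT : T ∈ distTriang C) (h : T.mor₃ = 0) :
    IsRetract T.obj₃ T.obj₂ := by
  have : Epi T.mor₂ := T.epi₂ hT h
  have : IsSplitEpi T.mor₂ := isSplitEpi_of_epi T.mor₂
  exact ⟨section_ T.mor₂, T.mor₂, IsSplitEpi.id T.mor₂⟩

private lemma mem_le_iff {le ge : Set C} (w : IsWeightStructure C le ge) (M : C) :
    M ∈ le ↔ ∀ X ∈ ge, ∀ f : X ⟶ M⟦(1 : ℤ)⟧, f = 0 := by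
  constructor
  · intro hM X hX f
    exact w.orth hX hM f
  · intro H
    obtain ⟨A, B, hA, hB, f, g, h, hT⟩ := w.decomp M
    have h0 : (Triangle.mk f g h).mor₃ = 0 := H B hB h
    exact w.le_retract hA (retract_obj₁ hT h0)

private lemma mem_ge_iff {le ge : Set C} (w : IsWeightStructure C le ge) (M : C) :
    M ∈ ge ↔ ∀ Y ∈ le, ∀ f : M ⟶ Y⟦(1 : ℤ)⟧, f = 0 := by
  constructor
  · intro hM Y hY f
    exact w.orth hM hY f
  · intro H
    obtain ⟨A, B, hA, hB, a, b, c, hT⟩ := w.decomp (M⟦(-1 : ℤ)⟧)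
    have hT' := rot_of_distTriang _ hT
    let e : (M⟦(-1 : ℤ)⟧)⟦(1 : ℤ)⟧ ≅ M := shiftNegShift M (1 : ℤ)
    have h0 : (Triangle.mk a b c).rotate.mor₃ = 0 := by
      have hz : e.inv ≫ (Triangle.mk a b c).rotate.mor₃ = 0 := H A hA _
      exact (cancel_epi e.inv).1 (hz.trans (comp_zero).symm)
    obtain ⟨s, r, hsr⟩ := retract_obj₃ hT' h0
    refine w.ge_retract hB ⟨e.inv ≫ s, r ≫ e.hom, ?_⟩
    exact (Category.assoc _ _ _).trans ((congrArg (e.inv ≫ ·) ((Category.assoc s r e.hom).symm.trans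
      ((congrArg (· ≫ e.hom) hsr).trans (Category.id_comp _)))).trans e.inv_hom_id)

end Helpers

/-- Uniqueness of the glued weight structure: in the gluing setup with weight structures
`w_D` and `w_E`, any weight structure on `C` for which both `i_*` and `j^*` are
weight-exact coincides with the glued one given by
`C^{w≤0} = {M | i^! M ∈ D^{w_D≤0}, j^* M ∈ E^{w_E≤0}}`,
`C^{w≥0} = {M | i^* M ∈ D^{w_D≥0}, j^* M ∈ E^{w_E≥0}}`. -/
theorem glued_weightStructure_unique
    (adj1 : iU ⊣ iS) (adj2 : iS ⊣ iSh) (adj3 : jL ⊣ jU) (adj4 : jU ⊣ jR)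
    (tri1 : ∀ M : C, ∃ δ : iS.obj (iU.obj M) ⟶ (jL.obj (jU.obj M))⟦(1 : ℤ)⟧,
      Triangle.mk (adj3.counit.app M) (adj1.unit.app M) δ ∈ distTriang C)
    (tri2 : ∀ M : C, ∃ δ : jR.obj (jU.obj M) ⟶ (iS.obj (iSh.obj M))⟦(1 : ℤ)⟧,
      Triangle.mk (adj2.counit.app M) (adj4.unit.app M) δ ∈ distTriang C)
    (v1 : ∀ X : E, Limits.IsZero (iU.obj (jL.obj X)))
    (v2 : ∀ X : E, Limits.IsZero (iSh.obj (jR.obj X)))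
    (hker : ∀ M : C, Limits.IsZero (jU.obj M) → ∃ N : D, Nonempty (M ≅ iS.obj N))
    (leD geD : Set D) (leE geE : Set E)
    (wD : IsWeightStructure D leD geD) (wE : IsWeightStructure E leE geE)
    (le ge : Set C) (w : IsWeightStructure C le ge)
    (hiS : (∀ X ∈ leD, iS.obj X ∈ le) ∧ (∀ X ∈ geD, iS.obj X ∈ ge))
    (hjU : (∀ M ∈ le, jU.obj M ∈ leE) ∧ (∀ M ∈ ge, jU.obj M ∈ geE)) :
    le = {M : C | iSh.obj M ∈ leD ∧ jU.obj M ∈ leE} ∧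
    ge = {M : C | iU.obj M ∈ geD ∧ jU.obj M ∈ geE} := by
  -- Step 1: `le ⊆ le'` and `ge ⊆ ge'`.
  have step_le : ∀ M ∈ le, iSh.obj M ∈ leD ∧ jU.obj M ∈ leE := by
    intro M hM
    refine ⟨?_, hjU.1 M hM⟩
    rw [mem_le_iff wD]
    intro X hX f
    have hu : (adj2.homEquiv X (M⟦(1 : ℤ)⟧)).symm
        (f ≫ (iSh.commShiftIso (1 : ℤ)).inv.app M) = 0 :=
      w.orth (hiS.2 X hX) hM _
    have hf' : f ≫ (iSh.commShiftIso (1 : ℤ)).inv.app M = 0 := by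
      have h2 := (adj2.homEquiv X (M⟦(1 : ℤ)⟧)).apply_symm_apply
        (f ≫ (iSh.commShiftIso (1 : ℤ)).inv.app M)
      rw [← h2, hu, Adjunction.homEquiv_unit, Functor.map_zero, comp_zero]
    have : f = (f ≫ (iSh.commShiftIso (1 : ℤ)).inv.app M) ≫
        (iSh.commShiftIso (1 : ℤ)).hom.app M := by simp
    rw [this, hf', zero_comp]
  have step_ge : ∀ M ∈ ge, iU.obj M ∈ geD ∧ jU.obj M ∈ geE := by
    intro M hM
    refine ⟨?_, hjU.2 M hM⟩
    rw [mem_ge_iff wD]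
    intro Y hY f
    have hv : (adj1.homEquiv M (Y⟦(1 : ℤ)⟧)) f ≫ (iS.commShiftIso (1 : ℤ)).hom.app Y = 0 :=
      w.orth hM (hiS.1 Y hY) _
    have hv0 : (adj1.homEquiv M (Y⟦(1 : ℤ)⟧)) f = 0 := by
      have h2 : (adj1.homEquiv M (Y⟦(1 : ℤ)⟧)) f ≫ (iS.commShiftIso (1 : ℤ)).hom.app Y
          = 0 ≫ (iS.commShiftIso (1 : ℤ)).hom.app Y := by rw [zero_comp]; exact hv
      exact (cancel_mono _).mp h2
    have h3 := (adj1.homEquiv M (Y⟦(1 : ℤ)⟧)).symm_apply_apply f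
    rw [← h3, hv0, Adjunction.homEquiv_counit, Functor.map_zero, zero_comp]
  -- Step 2: orthogonality between the glued classes.
  have glued_orth : ∀ (X M : C), iU.obj X ∈ geD → jU.obj X ∈ geE →
      iSh.obj M ∈ leD → jU.obj M ∈ leE → ∀ f : X ⟶ M⟦(1 : ℤ)⟧, f = 0 := by
    intro X M hX1 hX2 hM1 hM2 f
    obtain ⟨δ, hT⟩ := tri1 X
    have hc : adj3.counit.app X ≫ f = 0 := by
      have hu0 : adj3.homEquiv (jU.obj X) (M⟦(1 : ℤ)⟧) (adj3.counit.app X ≫ f) = 0 := by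
        have h1 : adj3.homEquiv (jU.obj X) (M⟦(1 : ℤ)⟧) (adj3.counit.app X ≫ f) ≫
            (jU.commShiftIso (1 : ℤ)).hom.app M = 0 := wE.orth hX2 hM2 _
        have h2 : adj3.homEquiv (jU.obj X) (M⟦(1 : ℤ)⟧) (adj3.counit.app X ≫ f) ≫
            (jU.commShiftIso (1 : ℤ)).hom.app M
            = 0 ≫ (jU.commShiftIso (1 : ℤ)).hom.app M := by rw [zero_comp]; exact h1
        exact (cancel_mono _).mp h2
      have h3 := (adj3.homEquiv (jU.obj X) (M⟦(1 : ℤ)⟧)).symm_apply_apply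
        (adj3.counit.app X ≫ f)
      rw [← h3, hu0, Adjunction.homEquiv_counit, Functor.map_zero, zero_comp]
    obtain ⟨g, hg⟩ := Triangle.yoneda_exact₂ _ hT f hc
    have hg0 : g = 0 := by
      have hu0 : adj2.homEquiv (iU.obj X) (M⟦(1 : ℤ)⟧) g = 0 := by
        have h1 : adj2.homEquiv (iU.obj X) (M⟦(1 : ℤ)⟧) g ≫
            (iSh.commShiftIso (1 : ℤ)).hom.app M = 0 := wD.orth hX1 hM1 _
        have h2 : adj2.homEquiv (iU.obj X) (M⟦(1 : ℤ)⟧) g ≫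
            (iSh.commShiftIso (1 : ℤ)).hom.app M
            = 0 ≫ (iSh.commShiftIso (1 : ℤ)).hom.app M := by rw [zero_comp]; exact h1
        exact (cancel_mono _).mp h2
      have h3 := (adj2.homEquiv (iU.obj X) (M⟦(1 : ℤ)⟧)).symm_apply_apply g
      rw [← h3, hu0, Adjunction.homEquiv_counit, Functor.map_zero, zero_comp]; rfl
    rw [hg, hg0, comp_zero]; rfl
  constructor
  · ext M
    simp only [Set.mem_setOf_eq]
    constructor
    · intro hM
      exact step_le M hM
    · rintro ⟨h1, h2⟩
      rw [mem_le_iff w]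
      intro X hX f
      obtain ⟨hX1, hX2⟩ := step_ge X hX
      exact glued_orth X M hX1 hX2 h1 h2 f
  · ext M
    simp only [Set.mem_setOf_eq]
    constructor
    · intro hM
      exact step_ge M hM
    · rintro ⟨h1, h2⟩
      rw [mem_ge_iff w]
      intro Y hY f
      obtain ⟨hY1, hY2⟩ := step_le Y hY
      exact glued_orth M Y h1 h2 hY1 hY2 f
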